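/- Let δ, δ' be an adjacent pair in M_ℝ^W \ 𝓗^W separated by a single wall with crossing point δ_0, and let χ ∈ 𝒞_δ = (δ + ∇) ∩ M^+. Then χ ∉ 𝒞_{δ'} if and only if χ lies on the boundary ∂(δ_0 + ∇). -/
import Mathlib


open scoped Pointwise

noncomputable section

theorem frontier_vadd' {V : Type} [NormedAddCommGroup V] (a : V) (s : Set V) :
    frontier (a +ᵥ s) = a +ᵥ frontier s := by
  simp only [frontier, closure_vadd, interior_vadd, ← Set.vadd_set_sdiff]

/-- Let `∇` be the (compact convex) magic-window polytope in `M_ℝ`, `M` the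
weight lattice and `M^+` the set of dominant weights.  Recall that `δ ∈ M_ℝ^W ∖ 𝓗^W` iff
`∂(δ + ∇)` contains no lattice point.  Let `(δ, δ')` be an adjacent pair: both lie off
`𝓗^W`, and the segment from `δ` to `δ'` meets `𝓗^W` in the single point
`δ₀ = δ + t₀(δ' - δ)` (every other point `δ + t(δ' - δ)`, `t ∈ [0,1]`, is off `𝓗^W`, i.e.
the boundary of its translate of `∇` contains no lattice point).  Then for
`χ ∈ 𝒞_δ = (δ + ∇) ∩ M^+` one has: `χ ∉ 𝒞_{δ'}` iff `χ ∈ ∂(δ₀ + ∇)`. -/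
theorem statement11 {V : Type} [NormedAddCommGroup V] [NormedSpace ℝ V]
    (M : AddSubgroup V) (Mplus : Set V) (hMplus : Mplus ⊆ (M : Set V))
    (nabla : Set V) (hconv : Convex ℝ nabla) (hcomp : IsCompact nabla)
    (δ δ' δ₀ : V) (t₀ : ℝ) (ht₀ : t₀ ∈ Set.Ioo (0 : ℝ) 1)
    (hδ₀ : δ₀ = δ + t₀ • (δ' - δ))
    (hadj : ∀ t ∈ Set.Icc (0 : ℝ) 1, t ≠ t₀ →
      ∀ x ∈ frontier ((δ + t • (δ' - δ)) +ᵥ nabla), x ∉ (M : Set V))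
    (χ : V) (hχ : χ ∈ (δ +ᵥ nabla) ∩ Mplus) :
    χ ∉ (δ' +ᵥ nabla) ∩ Mplus ↔ χ ∈ frontier (δ₀ +ᵥ nabla) := by
  obtain ⟨hχn, hχM⟩ := hχ
  have hχM' : χ ∈ (M : Set V) := hMplus hχM
  have hclosed : IsClosed nabla := hcomp.isClosed
  set y : ℝ → V := fun t => χ - (δ + t • (δ' - δ)) with hy
  have hmem : ∀ c : V, χ ∈ c +ᵥ nabla ↔ χ - c ∈ nabla := by
    intro c
    rw [Set.mem_vadd_set_iff_neg_vadd_mem, vadd_eq_add, neg_add_eq_sub]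
  have hfr : ∀ c : V, χ ∈ frontier (c +ᵥ nabla) ↔ χ - c ∈ frontier nabla := by
    intro c
    rw [frontier_vadd', Set.mem_vadd_set_iff_neg_vadd_mem, vadd_eq_add, neg_add_eq_sub]
  have hy0 : y 0 ∈ nabla := by
    have := (hmem δ).1 hχn
    simpa [hy] using this
  have hy0i : y 0 ∈ interior nabla := by
    by_contra h
    have hfr0 : χ - δ ∈ frontier nabla := by
      constructor
      · exact subset_closure (by simpa [hy] using hy0)
      · simpa [hy] using h
    refine hadj 0 ⟨le_refl 0, zero_le_one⟩ (ne_of_lt ht₀.1) χ ?_ hχM'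
    have : δ + (0:ℝ) • (δ' - δ) = δ := by simp
    rw [this]
    exact (hfr δ).2 hfr0
  have hycont : Continuous y := by fun_prop
  have hnot : ∀ t ∈ Set.Icc (0:ℝ) 1, t ≠ t₀ → y t ∉ frontier nabla := by
    intro t ht htne h
    exact hadj t ht htne χ ((hfr (δ + t • (δ' - δ))).2 (by simpa [hy] using h)) hχM'
  constructor
  · intro hns
    by_contra hfr0
    have hyt₀ : y t₀ ∉ frontier nabla := by
      intro h
      exact hfr0 ((hfr δ₀).2 (by simpa [hy, hδ₀] using h))
    have hall : ∀ t ∈ Set.Icc (0:ℝ) 1, y t ∉ frontier nabla := by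
      intro t ht
      rcases eq_or_ne t t₀ with rfl | hne
      · exact hyt₀
      · exact hnot t ht hne
    set U : Set ℝ := y ⁻¹' interior nabla with hU
    set W : Set ℝ := y ⁻¹' nablaᶜ with hW
    have hUo : IsOpen U := isOpen_interior.preimage hycont
    have hWo : IsOpen W := hclosed.isOpen_compl.preimage hycont
    have hcover : Set.Icc (0:ℝ) 1 ⊆ U ∪ W := by
      intro t ht
      by_cases h : y t ∈ nabla
      · left
        by_contra hi
        exact hall t ht ⟨subset_closure h, hi⟩
      · right; exact h
    have hdisj : Set.Icc (0:ℝ) 1 ∩ (U ∩ W) = ∅ := by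
      ext t
      simp only [Set.mem_inter_iff, Set.mem_empty_iff_false, iff_false, not_and, hU, hW,
        Set.mem_preimage, Set.mem_compl_iff]
      intro _ hu hw
      exact hw (interior_subset hu)
    have hpre : IsPreconnected (Set.Icc (0:ℝ) 1) := isPreconnected_Icc
    have h1 : (1:ℝ) ∈ U := by
      rcases isPreconnected_iff_subset_of_disjoint.1 hpre U W hUo hWo hcover hdisj with h | h
      · exact h ⟨zero_le_one, le_refl 1⟩
      · exact absurd (h ⟨le_refl 0, zero_le_one⟩) (by simp [hW, hy0])
    have hmem1 : χ ∈ δ' +ᵥ nabla := by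
      apply (hmem δ').2
      have h1' : y 1 ∈ nabla := interior_subset h1
      simpa [hy] using h1'
    exact hns ⟨hmem1, hχM⟩
  · rintro hfr0 ⟨hχ', -⟩
    have hyt₀f : y t₀ ∈ frontier nabla := by
      simpa [hy, hδ₀] using (hfr δ₀).1 hfr0
    have hy1 : y 1 ∈ nabla := by
      have := (hmem δ').1 hχ'
      simpa [hy] using this
    have hcombo : y t₀ = (1 - t₀) • y 0 + t₀ • y 1 := by
      simp only [hy]
      module
    have hint : y t₀ ∈ interior nabla := by
      rw [hcombo]
      exact hconv.combo_interior_closure_mem_interior hy0i (subset_closure hy1)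
        (by linarith [ht₀.2]) (le_of_lt ht₀.1) (by ring)
    exact hyt₀f.2 hint
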